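/- arXiv:1808.09444 — 2 statements merged into one kernel-verified Lean document; each statement's English description precedes it below -/
import Mathlib

section
/- Let P be an n×n row substochastic matrix (all entries nonnegative and each row sum at most 1) whose spectral radius is strictly less than one, and let M_{l,m} denote the (l,m)-minor of I − Pᵀ, i.e., the determinant of the matrix obtained from I − Pᵀ by deleting row l and column m. Then for all indices l and m, (−1)^{l+m} M_{l,m} ≤ M_{m,m}. -/
open Matrix Filter Topology

attribute [local instance] Matrix.linftyOpNormedRing Matrix.linftyOpNormedAlgebra

lemma pow_entry_nonneg {n : ℕ} (P : Matrix (Fin (n + 1)) (Fin (n + 1)) ℝ)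
    (hnonneg : ∀ i j, 0 ≤ P i j) (k : ℕ) : ∀ i j, 0 ≤ (P ^ k) i j := by
  induction k with
  | zero => intro i j; by_cases h : i = j <;> simp [Matrix.one_apply, h]
  | succ k ih =>
    intro i j
    rw [pow_succ, Matrix.mul_apply]
    exact Finset.sum_nonneg fun s _ => mul_nonneg (ih i s) (hnonneg s j)

lemma exists_pow_rowsum_lt {n : ℕ} (P : Matrix (Fin (n + 1)) (Fin (n + 1)) ℝ)
    (hnonneg : ∀ i j, 0 ≤ P i j)
    (hspec : ∀ μ ∈ spectrum ℂ (P.map (fun x => (x : ℂ))), ‖μ‖ < 1) :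
    ∃ k : ℕ, 0 < k ∧ ∃ r : ℝ, 0 ≤ r ∧ r < 1 ∧ ∀ i, ∑ j, (P ^ k) i j ≤ r := by
  set Q : Matrix (Fin (n + 1)) (Fin (n + 1)) ℂ := P.map (fun x => (x : ℂ)) with hQ
  haveI : CompleteSpace (Matrix (Fin (n + 1)) (Fin (n + 1)) ℂ) :=
    FiniteDimensional.complete ℂ _
  -- spectral radius < 1
  have hrad : spectralRadius ℂ Q < 1 := by
    by_cases hne : (spectrum ℂ Q).Nonempty
    · obtain ⟨μ0, hμ0, hmax⟩ :=
        Set.exists_max_image _ (fun μ => ‖μ‖₊) (Matrix.finite_spectrum Q) hne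
      have h1 : spectralRadius ℂ Q ≤ (‖μ0‖₊ : ENNReal) := by
        refine iSup₂_le fun μ hμ => ?_
        exact_mod_cast ENNReal.coe_le_coe.2 (hmax μ hμ)
      refine h1.trans_lt ?_
      rw [← ENNReal.coe_one, ENNReal.coe_lt_coe, ← NNReal.coe_lt_coe]
      exact hspec μ0 hμ0
    · rw [Set.not_nonempty_iff_eq_empty] at hne
      simp [spectralRadius, hne]
  -- Gelfand: eventually ‖Q^k‖ < 1
  have hgel := spectrum.pow_nnnorm_pow_one_div_tendsto_nhds_spectralRadius Q
  have hev : ∀ᶠ k : ℕ in atTop, ((‖Q ^ k‖₊ : ENNReal) ^ (1 / (k : ℝ))) < 1 :=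
    hgel.eventually_lt_const hrad
  obtain ⟨k, hklt, hk1⟩ := (hev.and (eventually_ge_atTop 1)).exists
  have hkpos : 0 < k := hk1
  have hnorm : ‖Q ^ k‖ < 1 := by
    have hk0 : (1 / (k : ℝ)) ≠ 0 := by positivity
    by_contra hge
    push_neg at hge
    have h1le : (1 : ENNReal) ≤ (‖Q ^ k‖₊ : ENNReal) := by
      rw [← ENNReal.coe_one, ENNReal.coe_le_coe, ← NNReal.coe_le_coe]
      simpa using hge
    have : (1 : ENNReal) ≤ (‖Q ^ k‖₊ : ENNReal) ^ (1 / (k : ℝ)) := by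
      calc (1 : ENNReal) = 1 ^ (1/(k:ℝ)) := by simp
      _ ≤ _ := ENNReal.rpow_le_rpow h1le (by positivity)
    exact absurd hklt (not_lt.mpr this)
  refine ⟨k, hkpos, ‖Q ^ k‖, norm_nonneg _, hnorm, fun i => ?_⟩
  -- row sums bounded by the norm
  have hmap : Q ^ k = (P ^ k).map (fun x : ℝ => (x : ℂ)) := by
    rw [hQ]
    exact (map_pow ((algebraMap ℝ ℂ).mapMatrix) P k).symm ▸ rfl
  have hsum : ∑ j, (P ^ k) i j = ∑ j, ‖(Q ^ k) i j‖ := by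
    rw [hmap]
    refine Finset.sum_congr rfl fun j _ => ?_
    have hnn : 0 ≤ (P ^ k) i j := pow_entry_nonneg P hnonneg k i j
    simp [Matrix.map_apply, Complex.norm_real, abs_of_nonneg hnn]
  rw [hsum]
  rw [Matrix.linfty_opNorm_def (Q ^ k)]
  have h1 : (∑ j, ‖(Q ^ k) i j‖₊ : NNReal) ≤
      (Finset.univ : Finset (Fin (n+1))).sup fun i => ∑ j, ‖(Q ^ k) i j‖₊ :=
    Finset.le_sup (f := fun i => ∑ j, ‖(Q ^ k) i j‖₊) (Finset.mem_univ i)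
  calc ∑ j, ‖(Q ^ k) i j‖ = ((∑ j, ‖(Q ^ k) i j‖₊ : NNReal) : ℝ) := by
        push_cast; rfl
    _ ≤ _ := NNReal.coe_le_coe.2 h1

variable {n : ℕ}

lemma mul_entry_nonneg (X Y : Matrix (Fin (n + 1)) (Fin (n + 1)) ℝ)
    (hX : ∀ i j, 0 ≤ X i j) (hY : ∀ i j, 0 ≤ Y i j) : ∀ i j, 0 ≤ (X * Y) i j := by
  intro i j
  rw [Matrix.mul_apply]
  exact Finset.sum_nonneg fun s _ => mul_nonneg (hX i s) (hY s j)

lemma pow_entry_nonneg' (R : Matrix (Fin (n + 1)) (Fin (n + 1)) ℝ)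
    (h : ∀ i j, 0 ≤ R i j) (N : ℕ) : ∀ i j, 0 ≤ (R ^ N) i j := by
  induction N with
  | zero => intro i j; by_cases hij : i = j <;> simp [Matrix.one_apply, hij]
  | succ N ih =>
    rw [pow_succ]
    exact mul_entry_nonneg _ _ ih h

lemma rowsum_pow_le (R : Matrix (Fin (n + 1)) (Fin (n + 1)) ℝ)
    (h : ∀ i j, 0 ≤ R i j) (r : ℝ) (hr : 0 ≤ r) (hrow : ∀ i, ∑ j, R i j ≤ r) (N : ℕ) :
    ∀ i, ∑ j, (R ^ N) i j ≤ r ^ N := by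
  induction N with
  | zero => intro i; simp [Matrix.one_apply, Finset.sum_ite_eq]
  | succ N ih =>
    intro i
    rw [pow_succ', pow_succ']
    calc ∑ j, (R * R ^ N) i j = ∑ j, ∑ s, R i s * (R ^ N) s j := by
          simp [Matrix.mul_apply]
      _ = ∑ s, R i s * ∑ j, (R ^ N) s j := by
          rw [Finset.sum_comm]; simp [Finset.mul_sum]
      _ ≤ ∑ s, R i s * r ^ N := by
          refine Finset.sum_le_sum fun s _ => mul_le_mul_of_nonneg_left (ih s) (h i s)
      _ = (∑ s, R i s) * r ^ N := by rw [Finset.sum_mul]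
      _ ≤ r * r ^ N :=
          mul_le_mul_of_nonneg_right (hrow i) (by positivity)

/-- If all row sums of a nonnegative real matrix are `< 1`, then `det (1 - R) ≠ 0`. -/
lemma det_one_sub_ne_zero_of_rowsum_lt (R : Matrix (Fin (n + 1)) (Fin (n + 1)) ℝ)
    (h : ∀ i j, 0 ≤ R i j) (r : ℝ) (hr1 : r < 1) (hrow : ∀ i, ∑ j, R i j ≤ r) :
    (1 - R).det ≠ 0 := by
  set Q : Matrix (Fin (n + 1)) (Fin (n + 1)) ℂ := R.map (fun x : ℝ => (x : ℂ)) with hQdef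
  haveI : CompleteSpace (Matrix (Fin (n + 1)) (Fin (n + 1)) ℂ) :=
    FiniteDimensional.complete ℂ _
  have hnorm : ‖Q‖ < 1 := by
    rw [Matrix.linfty_opNorm_def]
    have : ((Finset.univ : Finset (Fin (n+1))).sup fun i => ∑ j, ‖Q i j‖₊) < 1 := by
      refine Finset.sup_lt_iff (by norm_num) |>.2 fun i _ => ?_
      rw [← NNReal.coe_lt_coe]
      push_cast
      calc ∑ j, ‖Q i j‖ = ∑ j, R i j := by
            refine Finset.sum_congr rfl fun j _ => ?_
            simp [hQdef, Matrix.map_apply, Complex.norm_real, abs_of_nonneg (h i j)]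
        _ ≤ r := hrow i
        _ < 1 := hr1
    exact_mod_cast this
  have hunit : IsUnit (1 - Q) := ⟨Units.oneSub Q hnorm, rfl⟩
  have hdetC : (1 - Q).det ≠ 0 :=
    isUnit_iff_ne_zero.mp ((Matrix.isUnit_iff_isUnit_det _).mp hunit)
  intro hzero
  apply hdetC
  have : ((1 - R).map (fun x : ℝ => (x : ℂ))).det = ((1 - R).det : ℂ) :=
    (RingHom.map_det (algebraMap ℝ ℂ) (1 - R)).symm
  have hmap : (1 - R).map (fun x : ℝ => (x : ℂ)) = 1 - Q := by
    ext i j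
    by_cases hij : i = j <;>
      simp [Matrix.map_apply, Matrix.sub_apply, Matrix.one_apply, hij, hQdef]
  rw [hmap] at this
  rw [this, hzero, Complex.ofReal_zero]

/-- geometric identity `(1 - P) * (∑ i < k, P^i) = 1 - P^k`. -/
lemma one_sub_mul_geom (P : Matrix (Fin (n + 1)) (Fin (n + 1)) ℝ) (k : ℕ) :
    (1 - P) * (∑ i ∈ Finset.range k, P ^ i) = 1 - P ^ k := by
  have := mul_geom_sum (x := P) (n := k)
  have h2 : (1 - P) * (∑ i ∈ Finset.range k, P ^ i)
      = -((P - 1) * ∑ i ∈ Finset.range k, P ^ i) := by noncomm_ring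
  rw [h2, this]; noncomm_ring

lemma geom_mul_one_sub (P : Matrix (Fin (n + 1)) (Fin (n + 1)) ℝ) (k : ℕ) :
    (∑ i ∈ Finset.range k, P ^ i) * (1 - P) = 1 - P ^ k := by
  have := geom_sum_mul (x := P) (n := k)
  have h2 : (∑ i ∈ Finset.range k, P ^ i) * (1 - P)
      = -((∑ i ∈ Finset.range k, P ^ i) * (P - 1)) := by noncomm_ring
  rw [h2, this]; noncomm_ring

/-- The inverse of `1 - R` has nonnegative entries when `R` is nonnegative with
row sums at most `r < 1`. -/
lemma inv_one_sub_nonneg (R : Matrix (Fin (n + 1)) (Fin (n + 1)) ℝ)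
    (h : ∀ i j, 0 ≤ R i j) (r : ℝ) (hr0 : 0 ≤ r) (hr1 : r < 1)
    (hrow : ∀ i, ∑ j, R i j ≤ r) : ∀ i j, 0 ≤ (1 - R)⁻¹ i j := by
  have hdet : IsUnit (1 - R).det :=
    isUnit_iff_ne_zero.mpr (det_one_sub_ne_zero_of_rowsum_lt R h r hr1 hrow)
  set C := (1 - R)⁻¹ with hC
  have hCl : C * (1 - R) = 1 := Matrix.nonsing_inv_mul _ hdet
  have hCr : (1 - R) * C = 1 := Matrix.mul_nonsing_inv _ hdet
  intro i j
  -- partial sums tend to C entrywise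
  set T : ℕ → Matrix (Fin (n + 1)) (Fin (n + 1)) ℝ :=
    fun N => ∑ s ∈ Finset.range N, R ^ s with hT
  have hTid : ∀ N, C - T N = C * R ^ N := by
    intro N
    have : T N = C * ((1 - R) * T N) := by rw [← Matrix.mul_assoc, hCl, Matrix.one_mul]
    rw [one_sub_mul_geom R N] at this
    rw [this]
    rw [Matrix.mul_sub, Matrix.mul_one, sub_sub_cancel]
  have hTnn : ∀ N, 0 ≤ T N i j := by
    intro N
    simp only [hT, Matrix.sum_apply]
    exact Finset.sum_nonneg fun s _ => pow_entry_nonneg' R h s i j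
  set M : ℝ := ∑ s, |C i s| with hM
  have hbound : ∀ N, |C i j - T N i j| ≤ M * r ^ N := by
    intro N
    have : C i j - T N i j = ∑ s, C i s * (R ^ N) s j := by
      have := congrArg (fun X => X i j) (hTid N)
      simpa [Matrix.sub_apply, Matrix.mul_apply] using this
    rw [this]
    calc |∑ s, C i s * (R ^ N) s j| ≤ ∑ s, |C i s * (R ^ N) s j| :=
          Finset.abs_sum_le_sum_abs _ _
      _ = ∑ s, |C i s| * (R ^ N) s j := by
          refine Finset.sum_congr rfl fun s _ => ?_
          rw [abs_mul, abs_of_nonneg (pow_entry_nonneg' R h N s j)]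
      _ ≤ ∑ s, |C i s| * r ^ N := by
          refine Finset.sum_le_sum fun s _ => ?_
          refine mul_le_mul_of_nonneg_left ?_ (abs_nonneg _)
          calc (R ^ N) s j ≤ ∑ t, (R ^ N) s t :=
                Finset.single_le_sum (fun t _ => pow_entry_nonneg' R h N s t)
                  (Finset.mem_univ j)
            _ ≤ r ^ N := rowsum_pow_le R h r hr0 hrow N s
      _ = M * r ^ N := by rw [hM, Finset.sum_mul]
  have htend : Tendsto (fun N => T N i j) atTop (𝓝 (C i j)) := by
    rw [tendsto_iff_dist_tendsto_zero]
    refine squeeze_zero (fun N => dist_nonneg) (fun N => ?_)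
      (by
        have := tendsto_pow_atTop_nhds_zero_of_lt_one hr0 hr1
        simpa using this.const_mul M)
    rw [Real.dist_eq, abs_sub_comm]
    exact hbound N
  exact ge_of_tendsto htend (Filter.Eventually.of_forall hTnn)

/-- Main entry lemma: `B := (1 - P)⁻¹` satisfies `B l m ≤ B m m`, plus the facts we need. -/
lemma inv_one_sub_facts (P : Matrix (Fin (n + 1)) (Fin (n + 1)) ℝ)
    (hnonneg : ∀ i j, 0 ≤ P i j)
    (hrowsum : ∀ i, ∑ j, P i j ≤ 1)
    (k : ℕ) (hk : 0 < k) (r : ℝ) (hr0 : 0 ≤ r) (hr1 : r < 1)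
    (hrowk : ∀ i, ∑ j, (P ^ k) i j ≤ r) :
    (1 - P).det ≠ 0 ∧ (∀ i j, 0 ≤ (1 - P)⁻¹ i j) ∧
      ∀ l m, (1 - P)⁻¹ l m ≤ (1 - P)⁻¹ m m := by
  set R := P ^ k with hR
  have hRnn : ∀ i j, 0 ≤ R i j := pow_entry_nonneg' P hnonneg k
  have hdetR : (1 - R).det ≠ 0 := det_one_sub_ne_zero_of_rowsum_lt R hRnn r hr1 hrowk
  set S := ∑ i ∈ Finset.range k, P ^ i with hS
  have hfac : (1 - P) * S = 1 - R := one_sub_mul_geom P k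
  have hdetP : (1 - P).det ≠ 0 := by
    intro h0
    apply hdetR
    rw [← hfac, Matrix.det_mul, h0, zero_mul]
  have hdetPu : IsUnit (1 - P).det := isUnit_iff_ne_zero.mpr hdetP
  have hdetRu : IsUnit (1 - R).det := isUnit_iff_ne_zero.mpr hdetR
  set B := (1 - P)⁻¹ with hB
  set C := (1 - R)⁻¹ with hC
  have hCnn : ∀ i j, 0 ≤ C i j := inv_one_sub_nonneg R hRnn r hr0 hr1 hrowk
  have hSnn : ∀ i j, 0 ≤ S i j := by
    intro i j
    simp only [hS, Matrix.sum_apply]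
    exact Finset.sum_nonneg fun s _ => pow_entry_nonneg' P hnonneg s i j
  have hBSC : B = S * C := by
    have h1 : (1 - P) * (S * C) = 1 := by
      rw [← Matrix.mul_assoc, hfac, Matrix.mul_nonsing_inv _ hdetRu]
    calc B = B * ((1 - P) * (S * C)) := by rw [h1, Matrix.mul_one]
      _ = (B * (1 - P)) * (S * C) := by rw [Matrix.mul_assoc]
      _ = S * C := by rw [hB, Matrix.nonsing_inv_mul _ hdetPu, Matrix.one_mul]
  have hBnn : ∀ i j, 0 ≤ B i j := by
    rw [hBSC]; exact mul_entry_nonneg S C hSnn hCnn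
  have hBid : ∀ i j, B i j = (1 : Matrix (Fin (n+1)) (Fin (n+1)) ℝ) i j
      + ∑ s, P i s * B s j := by
    intro i j
    have h1 : (1 - P) * B = 1 := Matrix.mul_nonsing_inv _ hdetPu
    have h2 : B - P * B = 1 := by rw [← h1, Matrix.sub_mul, Matrix.one_mul]
    have := congrArg (fun X => X i j) h2
    simp only [Matrix.sub_apply, Matrix.mul_apply] at this
    linarith [this]
  have hmain : ∀ l m, B l m ≤ B m m := by
    intro l m
  -- maximum of the column
    obtain ⟨j0, -, hj0⟩ := Finset.exists_max_image Finset.univ (fun j => B j m)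
      ⟨m, Finset.mem_univ m⟩
    by_cases hcm : B j0 m ≤ B m m
    · exact le_trans (hj0 l (Finset.mem_univ l)) hcm
    push_neg at hcm
    exfalso
    set c := B j0 m with hc
    have hcpos : (1 : ℝ) ≤ B m m := by
      have := hBid m m
      simp only [Matrix.one_apply_eq] at this
      have hs : 0 ≤ ∑ s, P m s * B s m :=
        Finset.sum_nonneg fun s _ => mul_nonneg (hnonneg m s) (hBnn s m)
      linarith
    have hc0 : 0 < c := by linarith
    -- indicator of the argmax set
    set u : Fin (n + 1) → ℝ := fun j => if B j m = c then 1 else 0 with hu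
    have hu01 : ∀ j, 0 ≤ u j ∧ u j ≤ 1 := by
      intro j; by_cases hj : B j m = c <;> simp [hu, hj]
    have hkey : ∀ j, u j ≤ ∑ i, P j i * u i := by
      intro j
      by_cases hj : B j m = c
      · -- j is an argmax; in particular j ≠ m
        have hjm : j ≠ m := by intro h; rw [h] at hj; linarith
        have hPx : B j m = ∑ i, P j i * B i m := by
          have := hBid j m
          rw [Matrix.one_apply_ne hjm] at this
          linarith
        have hle : ∀ i, B i m ≤ c := fun i => hj0 i (Finset.mem_univ i)
        have hsum1 : ∑ i, P j i = 1 := by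
          have h1 : c ≤ (∑ i, P j i) * c := by
            calc c = ∑ i, P j i * B i m := by rw [← hPx, hj]
              _ ≤ ∑ i, P j i * c :=
                  Finset.sum_le_sum fun i _ =>
                    mul_le_mul_of_nonneg_left (hle i) (hnonneg j i)
              _ = (∑ i, P j i) * c := by rw [Finset.sum_mul]
          have h2 : (1 : ℝ) ≤ ∑ i, P j i := by
            by_contra hlt
            push_neg at hlt
            nlinarith
          linarith [hrowsum j]
        have hzero : ∀ i, P j i * (c - B i m) = 0 := by
          have hsumzero : ∑ i, P j i * (c - B i m) = 0 := by
            have : ∑ i, P j i * (c - B i m)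
                = (∑ i, P j i) * c - ∑ i, P j i * B i m := by
              rw [Finset.sum_mul, ← Finset.sum_sub_distrib]
              congr 1; ext i; ring
            rw [this, hsum1, one_mul, ← hPx, hj, sub_self]
          intro i
          have hnn : ∀ i ∈ Finset.univ, 0 ≤ P j i * (c - B i m) := fun i _ =>
            mul_nonneg (hnonneg j i) (by linarith [hle i])
          exact (Finset.sum_eq_zero_iff_of_nonneg hnn).mp hsumzero i (Finset.mem_univ i)
        have : ∑ i, P j i * u i = ∑ i, P j i := by
          refine Finset.sum_congr rfl fun i _ => ?_
          by_cases hi : B i m = c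
          · simp [hu, hi]
          · have : P j i = 0 := by
              have := hzero i
              rcases mul_eq_zero.mp this with h | h
              · exact h
              · exact absurd (by linarith : B i m = c) hi
            simp [hu, hi, this]
        rw [this, hsum1]
        simp [hu, hj]
      · have : u j = 0 := by simp [hu, hj]
        rw [this]
        exact Finset.sum_nonneg fun i _ => mul_nonneg (hnonneg j i) (hu01 i).1
    -- iterate: u ≤ P^N u
    have hiter : ∀ N : ℕ, ∀ j, u j ≤ ∑ i, (P ^ N) j i * u i := by
      intro N
      induction N with
      | zero =>
        intro j
        have : ∑ i, ((1 : Matrix (Fin (n+1)) (Fin (n+1)) ℝ)) j i * u i = u j := by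
          simp [Matrix.one_apply, Finset.sum_ite_eq]
        simpa [pow_zero] using this.ge
      | succ N ih =>
        intro j
        calc u j ≤ ∑ i, P j i * u i := hkey j
          _ ≤ ∑ i, P j i * (∑ s, (P ^ N) i s * u s) :=
              Finset.sum_le_sum fun i _ =>
                mul_le_mul_of_nonneg_left (ih i) (hnonneg j i)
          _ = ∑ i, ((P ^ (N + 1)) j i) * u i := by
              rw [pow_succ']
              simp only [Matrix.mul_apply]
              calc ∑ i, P j i * (∑ s, (P ^ N) i s * u s)
                  = ∑ i, ∑ s, P j i * ((P ^ N) i s * u s) := by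
                    simp [Finset.mul_sum]
                _ = ∑ s, ∑ i, P j i * ((P ^ N) i s * u s) := Finset.sum_comm
                _ = ∑ s, (∑ i, P j i * (P ^ N) i s) * u s := by
                    refine Finset.sum_congr rfl fun s _ => ?_
                    rw [Finset.sum_mul]
                    exact Finset.sum_congr rfl fun i _ => by ring
    -- contradiction with the row sum bound at power k
    have hcontr : (1 : ℝ) ≤ r := by
      calc (1 : ℝ) = u j0 := by simp [hu, hc]
        _ ≤ ∑ i, (P ^ k) j0 i * u i := hiter k j0
        _ ≤ ∑ i, (P ^ k) j0 i :=
            Finset.sum_le_sum fun i _ => by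
              have := (hu01 i)
              nlinarith [pow_entry_nonneg' P hnonneg k j0 i]
        _ ≤ r := hrowk j0
    linarith
  exact ⟨hdetP, hBnn, hmain⟩

lemma det_one_sub_pos {n : ℕ} (P : Matrix (Fin (n + 1)) (Fin (n + 1)) ℝ)
    (hspec : ∀ μ ∈ spectrum ℂ (P.map (fun x => (x : ℂ))), ‖μ‖ < 1)
    (hne : (1 - P).det ≠ 0) : 0 < (1 - P).det := by
  set Q : Matrix (Fin (n + 1)) (Fin (n + 1)) ℂ := P.map (fun x : ℝ => (x : ℂ)) with hQ
  set f : ℝ → ℝ := fun t => (1 - t • P).det with hf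
  have hcont : Continuous f := by
    exact (continuous_const.sub (continuous_id.smul continuous_const)).matrix_det
  have hnz : ∀ t ∈ Set.Icc (0 : ℝ) 1, f t ≠ 0 := by
    rintro t ⟨ht0, ht1⟩
    rcases eq_or_lt_of_le ht0 with h0 | h0
    · simp [hf, ← h0]
    intro hft
    -- then 1/t is in the spectrum of Q
    have htne : (t : ℂ) ≠ 0 := by exact_mod_cast ne_of_gt h0
    have hC : ((1 : Matrix (Fin (n+1)) (Fin (n+1)) ℂ) - (t : ℂ) • Q).det = 0 := by
      have hmap : (1 - t • P).map (fun x : ℝ => (x : ℂ)) = 1 - (t : ℂ) • Q := by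
        ext i j
        by_cases hij : i = j <;>
          simp [Matrix.map_apply, Matrix.sub_apply, Matrix.one_apply, hij, hQ,
            Matrix.smul_apply]
      have hmd : ((1 - t • P).map (fun x : ℝ => (x : ℂ))).det = ((1 - t • P).det : ℂ) :=
        (RingHom.map_det (algebraMap ℝ ℂ) (1 - t • P)).symm
      rw [hmap] at hmd
      simp only [hf] at hft
      rw [hmd, hft, Complex.ofReal_zero]
    have hdet2 : ((1 / (t : ℂ)) • ((1 : Matrix (Fin (n+1)) (Fin (n+1)) ℂ) - (t : ℂ) • Q)).det
        = 0 := by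
      rw [Matrix.det_smul, hC, mul_zero]
    have hform : (1 / (t : ℂ)) • ((1 : Matrix (Fin (n+1)) (Fin (n+1)) ℂ) - (t : ℂ) • Q)
        = algebraMap ℂ (Matrix (Fin (n+1)) (Fin (n+1)) ℂ) (1 / t) - Q := by
      rw [smul_sub, smul_smul, one_div, inv_mul_cancel₀ htne, one_smul]
      congr 1
      rw [Algebra.algebraMap_eq_smul_one]
    have hmem : (1 / (t : ℂ)) ∈ spectrum ℂ Q := by
      rw [spectrum.mem_iff]
      intro hunit
      rw [← hform] at hunit
      have := (Matrix.isUnit_iff_isUnit_det _).mp hunit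
      rw [hdet2] at this
      exact (isUnit_iff_ne_zero.mp this) rfl
    have := hspec _ hmem
    have habs : ‖(1 / (t : ℂ))‖ = 1 / t := by
      rw [norm_div, norm_one, Complex.norm_real, Real.norm_eq_abs, abs_of_pos h0]
    rw [habs] at this
    have : (1 : ℝ) < t := by
      rw [div_lt_iff₀ h0, one_mul] at this
      exact this
    linarith
  by_contra hle
  push_neg at hle
  have hlt : f 1 < 0 := lt_of_le_of_ne (by simpa [hf] using hle) (by simpa [hf] using hne)
  have h0 : f 0 = 1 := by simp [hf]
  have : (0 : ℝ) ∈ Set.Icc (f 1) (f 0) := ⟨le_of_lt hlt, by rw [h0]; norm_num⟩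
  obtain ⟨c, hc, hfc⟩ := intermediate_value_Icc' (by norm_num : (0:ℝ) ≤ 1)
    hcont.continuousOn this
  exact hnz c hc hfc

/-- Let `P` be an `(n+1) × (n+1)` row substochastic matrix with spectral
radius strictly less than one, and let `M l m` denote the `(l,m)`-minor of `I - Pᵀ`
(the determinant of the matrix obtained from `I - Pᵀ` by deleting row `l` and
column `m`).  Then `(-1)^(l+m) * M l m ≤ M m m` for all indices `l`, `m`. -/
theorem neg_one_pow_mul_minor_le_diagonal_minor
    {n : ℕ} (P : Matrix (Fin (n + 1)) (Fin (n + 1)) ℝ)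
    (hnonneg : ∀ i j, 0 ≤ P i j)
    (hrowsum : ∀ i, ∑ j, P i j ≤ 1)
    (hspec : ∀ μ ∈ spectrum ℂ (P.map (fun x => (x : ℂ))), ‖μ‖ < 1)
    (l m : Fin (n + 1)) :
    (-1 : ℝ) ^ ((l : ℕ) + (m : ℕ)) *
        ((1 - Pᵀ).submatrix l.succAbove m.succAbove).det ≤
      ((1 - Pᵀ).submatrix m.succAbove m.succAbove).det := by
  obtain ⟨k, hk, r, hr0, hr1, hrowk⟩ := exists_pow_rowsum_lt P hnonneg hspec
  obtain ⟨hdet, hBnn, hBle⟩ := inv_one_sub_facts P hnonneg hrowsum k hk r hr0 hr1 hrowk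
  have hdetpos : 0 < (1 - P).det := det_one_sub_pos P hspec hdet
  set A : Matrix (Fin (n + 1)) (Fin (n + 1)) ℝ := 1 - Pᵀ with hA
  have hAT : A = (1 - P)ᵀ := by rw [Matrix.transpose_sub, Matrix.transpose_one]
  have hdetA : A.det = (1 - P).det := by rw [hAT, Matrix.det_transpose]
  have hdetAu : IsUnit A.det := isUnit_iff_ne_zero.mpr (by rw [hdetA]; exact hdet)
  have hadj : ∀ i j, A.adjugate i j = A.det * A⁻¹ i j := by
    intro i j
    rw [Matrix.inv_def, Ring.inverse_eq_inv]
    simp only [Matrix.smul_apply, smul_eq_mul]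
    rw [← mul_assoc, mul_inv_cancel₀ (by rw [hdetA]; exact hdet), one_mul]
  have hAinv : ∀ i j, A⁻¹ i j = (1 - P)⁻¹ j i := by
    intro i j
    rw [hAT, ← Matrix.transpose_nonsing_inv]
    rfl
  have hL : (-1 : ℝ) ^ ((l : ℕ) + (m : ℕ)) *
      ((1 - Pᵀ).submatrix l.succAbove m.succAbove).det = A.adjugate m l := by
    rw [Matrix.adjugate_fin_succ_eq_det_submatrix]
  have hR : ((1 - Pᵀ).submatrix m.succAbove m.succAbove).det = A.adjugate m m := by
    rw [Matrix.adjugate_fin_succ_eq_det_submatrix]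
    rw [Even.neg_one_pow ⟨(m : ℕ), rfl⟩, one_mul]
  rw [hL, hR, hadj, hadj, hAinv, hAinv, hdetA]
  exact mul_le_mul_of_nonneg_left (hBle l m) (le_of_lt hdetpos)
end

section
/- Let B = (b_{ij}) be an n×n real matrix and let l ≠ m be indices. Then Σ_{k≠l} b_{km} f_{lk} · adj(B(k|k)) · b_{·k} = b_{lm} det(B(l|l)). -/
open Matrix

/-- The `l`-th column of `B` with its `l`-th entry deleted (a vector in `ℝⁿ`). -/
def delCol {n : ℕ} (B : Matrix (Fin (n + 1)) (Fin (n + 1)) ℝ) (l : Fin (n + 1)) :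
    Fin n → ℝ :=
  fun i => B (l.succAbove i) l

/-- The `l`-th row of `B` with its `l`-th entry deleted (a row vector in `ℝⁿ`). -/
def delRow {n : ℕ} (B : Matrix (Fin (n + 1)) (Fin (n + 1)) ℝ) (l : Fin (n + 1)) :
    Fin n → ℝ :=
  fun j => B l (l.succAbove j)

/-- `B(i|j)`: the matrix obtained from `B` by deleting row `i` and column `j`. -/
def delMat {n : ℕ} (B : Matrix (Fin (n + 1)) (Fin (n + 1)) ℝ) (i j : Fin (n + 1)) :
    Matrix (Fin n) (Fin n) ℝ :=
  B.submatrix i.succAbove j.succAbove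

/-- `f m l` (for `m ≠ l`): the standard basis row vector of `ℝⁿ` selecting the
coordinate corresponding to the original index `m` after index `l` has been deleted;
it equals `eₘ` if `m < l` and `e_{m-1}` if `m > l`. -/
def fSel {n : ℕ} (m l : Fin (n + 1)) : Fin n → ℝ :=
  fun j => if l.succAbove j = m then 1 else 0

lemma val_succAbove' {n : ℕ} (p : Fin (n + 1)) (i : Fin n) :
    (p.succAbove i : ℕ) = if (i : ℕ) < (p : ℕ) then (i : ℕ) else (i : ℕ) + 1 := by
  rcases lt_or_ge (Fin.castSucc i) p with h | h
  · rw [Fin.succAbove_of_castSucc_lt _ _ h, if_pos]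
    · rfl
    · exact h
  · rw [Fin.succAbove_of_le_castSucc _ _ h, if_neg]
    · rfl
    · exact not_lt.2 h

lemma succAbove_succAbove_comm {n : ℕ} {k l : Fin (n + 2)} {j₀ j₁ : Fin (n + 1)}
    (h0 : k.succAbove j₀ = l) (h1 : l.succAbove j₁ = k) (t : Fin n) :
    k.succAbove (j₀.succAbove t) = l.succAbove (j₁.succAbove t) := by
  have h0' := congrArg Fin.val h0
  have h1' := congrArg Fin.val h1
  rw [val_succAbove'] at h0' h1'
  apply Fin.ext
  rw [val_succAbove', val_succAbove', val_succAbove', val_succAbove']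
  split_ifs at h0' h1' ⊢ <;> omega

lemma sign_aux {n : ℕ} {k l : Fin (n + 2)} {j₀ j₁ : Fin (n + 1)}
    (h0 : k.succAbove j₀ = l) (h1 : l.succAbove j₁ = k) :
    ∀ (j : Fin (n + 1)), ((-1 : ℝ)) ^ ((j : ℕ) + (j₀ : ℕ)) =
      (-1 : ℝ) ^ ((k : ℕ) + (l : ℕ) + 1) * (-1 : ℝ) ^ ((j : ℕ) + (j₁ : ℕ)) := by
  intro j
  have h0' := congrArg Fin.val h0
  have h1' := congrArg Fin.val h1
  rw [val_succAbove'] at h0' h1'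
  rw [← pow_add]
  rw [neg_one_pow_eq_pow_mod_two, neg_one_pow_eq_pow_mod_two (n := (k:ℕ) + l + 1 + ((j:ℕ) + j₁))]
  congr 1
  split_ifs at h0' h1' <;> omega

lemma key {n : ℕ} (B : Matrix (Fin (n + 2)) (Fin (n + 2)) ℝ) (k l : Fin (n + 2))
    (hkl : k ≠ l) :
    fSel l k ⬝ᵥ ((delMat B k k).adjugate *ᵥ delCol B k) =
      (-1 : ℝ) ^ ((k : ℕ) + (l : ℕ) + 1) * (delMat B k l).det := by
  obtain ⟨j₀, hj₀⟩ := Fin.exists_succAbove_eq (Ne.symm hkl)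
  obtain ⟨j₁, hj₁⟩ := Fin.exists_succAbove_eq hkl
  have hdot : fSel l k ⬝ᵥ ((delMat B k k).adjugate *ᵥ delCol B k) =
      ((delMat B k k).adjugate *ᵥ delCol B k) j₀ := by
    unfold fSel dotProduct
    rw [Fintype.sum_eq_single j₀]
    · simp [hj₀]
    · intro x hx
      have hne : k.succAbove x ≠ l := fun h =>
        hx (Fin.succAbove_right_injective (h.trans hj₀.symm))
      simp [hne]
  rw [hdot]
  simp only [mulVec, dotProduct]
  rw [det_succ_column (delMat B k l) j₁, Finset.mul_sum]
  refine Finset.sum_congr rfl fun j _ => ?_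
  rw [adjugate_fin_succ_eq_det_submatrix]
  have hsub : (delMat B k k).submatrix j.succAbove j₀.succAbove =
      (delMat B k l).submatrix j.succAbove j₁.succAbove := by
    ext a b
    simp only [delMat, submatrix_apply]
    rw [succAbove_succAbove_comm hj₀ hj₁ b]
  have hent : (delMat B k l) j j₁ = B (k.succAbove j) k := by
    simp only [delMat, submatrix_apply, hj₁]
  rw [hsub, hent]
  have : (delCol B k) j = B (k.succAbove j) k := rfl
  rw [this, sign_aux hj₀ hj₁ j]
  ring

/-- For an `(n+1) × (n+1)` real matrix `B` and indices `l ≠ m`: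
`∑_{k≠l} b_{km} f_{lk} · adj(B(k|k)) · b_{·k} = b_{lm} det B(l|l)`. -/
theorem sum_fSel_adjugate_eq_det_minor
    {n : ℕ} (B : Matrix (Fin (n + 1)) (Fin (n + 1)) ℝ)
    (l m : Fin (n + 1)) (hlm : l ≠ m) :
    ∑ k ∈ Finset.univ.erase l,
        B k m * (fSel l k ⬝ᵥ ((delMat B k k).adjugate *ᵥ delCol B k)) =
      B l m * (delMat B l l).det := by
  match n with
  | 0 => exact absurd (Subsingleton.elim (α := Fin 1) l m) hlm
  | n + 1 =>
    -- degenerate determinant identity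
    set C := B.updateCol l (fun i => B i m) with hC
    have hdetC : C.det = 0 := by
      apply det_zero_of_column_eq hlm
      intro i
      simp [hC, updateCol_apply, Ne.symm hlm]
    have hexp : (0 : ℝ) =
        ∑ k : Fin (n + 2), (-1 : ℝ) ^ ((k : ℕ) + (l : ℕ)) * B k m * (delMat B k l).det := by
      rw [← hdetC, det_succ_column C l]
      refine Finset.sum_congr rfl fun k _ => ?_
      congr 1
      · congr 1
        simp [hC, updateCol_apply]
      · congr 1
        ext a b
        simp [delMat, submatrix_apply, hC, updateCol_apply, Fin.succAbove_ne l b]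
    rw [Fintype.sum_eq_add_sum_compl l, Finset.compl_singleton] at hexp
    have hll : (-1 : ℝ) ^ ((l : ℕ) + (l : ℕ)) = 1 := by
      rw [← two_mul, pow_mul]; norm_num
    rw [hll, one_mul] at hexp
    calc ∑ k ∈ Finset.univ.erase l,
          B k m * (fSel l k ⬝ᵥ ((delMat B k k).adjugate *ᵥ delCol B k))
        = ∑ k ∈ Finset.univ.erase l,
            -((-1 : ℝ) ^ ((k : ℕ) + (l : ℕ)) * B k m * (delMat B k l).det) := by
          refine Finset.sum_congr rfl fun k hk => ?_
          rw [key B k l (Finset.ne_of_mem_erase hk), pow_succ]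
          ring
      _ = B l m * (delMat B l l).det := by
          rw [Finset.sum_neg_distrib]
          linarith [hexp]
end
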